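/- Let f : R₁ → R₂ be a good homomorphism of multiplicative hyperrings and α an endomorphism of both R₁ and R₂ with α∘f = f∘α. If I₂ is an α-prime hyperideal of R₂, then f⁻¹(I₂) is an α-prime hyperideal of R₁. -/
import Mathlib


open Pointwise

namespace HyperPaper

/-- A commutative multiplicative hyperring on an additive commutative group:
the hypermultiplication is associative, commutative, subdistributive over `+`,
and compatible with negation. -/
structure MulHyperring (R : Type*) [AddCommGroup R] where
  hmul : R → R → Set R
  nonempty : ∀ a b, (hmul a b).Nonempty
  comm : ∀ a b, hmul a b = hmul b a
  assoc : ∀ a b c, (⋃ t ∈ hmul a b, hmul t c) = ⋃ t ∈ hmul b c, hmul a t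
  distrib : ∀ a b c, hmul a (b + c) ⊆ hmul a b + hmul a c
  hmul_neg : ∀ a b, hmul a (-b) = -(hmul a b)

variable {R : Type*} [AddCommGroup R]

/-- Product of two subsets under the hyperoperation. -/
def MulHyperring.setMul (H : MulHyperring R) (A B : Set R) : Set R :=
  ⋃ a ∈ A, ⋃ b ∈ B, H.hmul a b

/-- `H.hpow a n` is the `(n+1)`-fold hyperproduct `a ∘ a ∘ ⋯ ∘ a`. -/
def MulHyperring.hpow (H : MulHyperring R) (a : R) : ℕ → Set R
  | 0 => {a}
  | n + 1 => H.setMul {a} (H.hpow a n)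

/-- `H.hprod a l` is the hyperproduct of the list `a :: l`. -/
def MulHyperring.hprod (H : MulHyperring R) (a : R) : List R → Set R
  | [] => {a}
  | b :: l => H.setMul {a} (H.hprod b l)

/-- A hyperideal: an additive subgroup absorbing hypermultiplication. -/
structure Hyperideal (H : MulHyperring R) where
  carrier : Set R
  zero_mem : (0 : R) ∈ carrier
  sub_mem : ∀ a b, a ∈ carrier → b ∈ carrier → a - b ∈ carrier
  absorb : ∀ r x, x ∈ carrier → H.hmul r x ⊆ carrier

/-- A C-hyperideal: any finite hyperproduct meeting it is contained in it. -/
def IsCHyperideal (H : MulHyperring R) (I : Hyperideal H) : Prop :=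
  ∀ a (l : List R), (H.hprod a l ∩ I.carrier).Nonempty → H.hprod a l ⊆ I.carrier

/-- A good homomorphism between multiplicative hyperrings. -/
def IsGoodHom {R₁ R₂ : Type*} [AddCommGroup R₁] [AddCommGroup R₂]
    (H₁ : MulHyperring R₁) (H₂ : MulHyperring R₂) (f : R₁ → R₂) : Prop :=
  (∀ x y, f (x + y) = f x + f y) ∧ ∀ x y, f '' H₁.hmul x y = H₂.hmul (f x) (f y)

/-- A good endomorphism. -/
def IsGoodEndo (H : MulHyperring R) (α : R → R) : Prop :=
  IsGoodHom H H α

/-- A proper hyperideal `I` is `α`-prime if `x ∘ y ⊆ I` implies `x ∈ I` or `α y ∈ I`. -/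
def IsAlphaPrime (H : MulHyperring R) (α : R → R) (I : Hyperideal H) : Prop :=
  I.carrier ≠ Set.univ ∧
    ∀ x y, H.hmul x y ⊆ I.carrier → x ∈ I.carrier ∨ α y ∈ I.carrier

/-- A proper hyperideal `I` is prime if `x ∘ y ⊆ I` implies `x ∈ I` or `y ∈ I`. -/
def IsPrime (H : MulHyperring R) (I : Hyperideal H) : Prop :=
  I.carrier ≠ Set.univ ∧
    ∀ x y, H.hmul x y ⊆ I.carrier → x ∈ I.carrier ∨ y ∈ I.carrier

/-- The radical `√S = {r | rⁿ ⊆ S for some n}`. -/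
def radical (H : MulHyperring R) (S : Set R) : Set R :=
  {r | ∃ n : ℕ, H.hpow r n ⊆ S}

/-- The `α`-radical `ᵅ√S = {r | α(rⁿ) ⊆ S for some n}`. -/
def alphaRad (H : MulHyperring R) (α : R → R) (S : Set R) : Set R :=
  {r | ∃ n : ℕ, α '' H.hpow r n ⊆ S}

/-- The set of `α`-nilpotent elements. -/
def nilAlpha (H : MulHyperring R) (α : R → R) : Set R :=
  {x | ∃ n : ℕ, (0 : R) ∈ α '' H.hpow x n}

/-- The `n`-fold set power of a hyperideal carrier: `idealPow H S n = S^(n+1)`. -/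
def idealPow (H : MulHyperring R) (S : Set R) : ℕ → Set R
  | 0 => S
  | n + 1 => H.setMul S (idealPow H S n)

end HyperPaper

open HyperPaper

/-- Preimage of an `α`-prime hyperideal under a good homomorphism
commuting with `α` is `α`-prime. -/
theorem stmt9 {R₁ R₂ : Type*} [AddCommGroup R₁] [AddCommGroup R₂]
    (H₁ : MulHyperring R₁) (H₂ : MulHyperring R₂) (f : R₁ → R₂)
    (hf : IsGoodHom H₁ H₂ f) (α₁ : R₁ → R₁) (α₂ : R₂ → R₂)
    (hα₁ : IsGoodEndo H₁ α₁) (hα₂ : IsGoodEndo H₂ α₂)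
    (hcomm : ∀ r : R₁, α₂ (f r) = f (α₁ r))
    (I₂ : Hyperideal H₂) (hp : IsAlphaPrime H₂ α₂ I₂)
    (hproper : f ⁻¹' I₂.carrier ≠ Set.univ) :
    ∃ J : Hyperideal H₁, J.carrier = f ⁻¹' I₂.carrier ∧ IsAlphaPrime H₁ α₁ J := by
  obtain ⟨hadd, hmul⟩ := hf
  have hf0 : f 0 = 0 := by
    have := hadd 0 0; simpa using this
  have hfsub : ∀ a b, f (a - b) = f a - f b := by
    intro a b
    have hneg : f (-b) = - f b := by
      have h := hadd b (-b); simp [hf0] at h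
      exact eq_neg_of_add_eq_zero_right h.symm
    rw [sub_eq_add_neg, hadd, hneg, sub_eq_add_neg]
  refine ⟨⟨f ⁻¹' I₂.carrier, ?_, ?_, ?_⟩, rfl, hproper, ?_⟩
  · simp [Set.mem_preimage, hf0, I₂.zero_mem]
  · intro a b ha hb
    simp only [Set.mem_preimage] at *
    rw [hfsub]; exact I₂.sub_mem _ _ ha hb
  · intro r x hx y hy
    have : f y ∈ H₂.hmul (f r) (f x) := by
      rw [← hmul]; exact ⟨y, hy, rfl⟩
    exact I₂.absorb (f r) (f x) hx this
  · intro x y h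
    have hsub : H₂.hmul (f x) (f y) ⊆ I₂.carrier := by
      rw [← hmul]
      rintro _ ⟨t, ht, rfl⟩
      exact h ht
    rcases hp.2 (f x) (f y) hsub with h1 | h1
    · exact Or.inl h1
    · right; simpa [Set.mem_preimage, ← hcomm] using h1
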